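/- For probabilities λ_j = Tr(ρ a_j) with λ₀ = min_j λ_j > 0, if a POVM element family (A_j) satisfies Σ_j ‖A_j − a_j‖ ≤ ε with ε ≤ (λ₀/2)², then for each j: |Tr(ρ A_j) − λ_j| ≤ ε, and the normalized states ρ̂'_j = √ρ A_j √ρ / Tr(ρ A_j) and ρ̂_j = √ρ a_j √ρ / λ_j satisfy ‖ρ̂'_j − ρ̂_j‖₁ ≤ 2ε/λ₀². -/

import Mathlib

open scoped ComplexOrder
open Matrix

noncomputable section

namespace Matrix.PosSemidef

def sqrt {n 𝕜 : Type*} [Fintype n] [DecidableEq n] [RCLike 𝕜] {A : Matrix n n 𝕜}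
    (hA : A.PosSemidef) : Matrix n n 𝕜 :=
  hA.1.eigenvectorUnitary.1 * diagonal ((↑) ∘ Real.sqrt ∘ hA.1.eigenvalues) *
    (star hA.1.eigenvectorUnitary : Matrix n n 𝕜)

end Matrix.PosSemidef

/-- Trace norm: Tr √(A†A). -/
def traceNorm {n : Type*} [Fintype n] [DecidableEq n] (A : Matrix n n ℂ) : ℝ :=
  ((Matrix.posSemidef_conjTranspose_mul_self A).sqrt).trace.re

/-- Operator (sup) norm of a matrix, as the norm of the induced map on ℓ². -/
def opNorm {n : Type*} [Fintype n] [DecidableEq n] (A : Matrix n n ℂ) : ℝ :=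
  ‖LinearMap.toContinuousLinearMap (Matrix.toEuclideanLin A)‖

namespace Matrix.PosSemidef

section SqrtPort

open scoped MatrixOrder

variable {n : Type*} [Fintype n] [DecidableEq n]

lemma sqrt_eq_cfcSqrt {A : Matrix n n ℂ} (hA : A.PosSemidef) : hA.sqrt = CFC.sqrt A := by
  rw [CFC.sqrt_eq_cfc, cfc_nnreal_eq_real _ A, hA.1.cfc_eq]
  simp only [IsHermitian.cfc, Unitary.conjStarAlgAut_apply, Matrix.PosSemidef.sqrt]
  congr 3
  funext i
  simp [Real.coe_sqrt, hA.eigenvalues_nonneg i]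

lemma sqrt_mul_self {A : Matrix n n ℂ} (hA : A.PosSemidef) : hA.sqrt * hA.sqrt = A := by
  rw [sqrt_eq_cfcSqrt]
  exact CFC.sqrt_mul_sqrt_self A hA.nonneg

lemma posSemidef_sqrt {A : Matrix n n ℂ} (hA : A.PosSemidef) : hA.sqrt.PosSemidef := by
  rw [sqrt_eq_cfcSqrt]
  exact Matrix.nonneg_iff_posSemidef.mp (CFC.sqrt_nonneg A)

lemma eq_sqrt_of_sq_eq {B : Matrix n n ℂ} (hB : B.PosSemidef) (A : Matrix n n ℂ)
    {hA : A.PosSemidef} (h : B ^ 2 = A) : B = hA.sqrt := by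
  rw [sqrt_eq_cfcSqrt, eq_comm, CFC.sqrt_eq_iff A B hA.nonneg hB.nonneg, ← sq, h]

end SqrtPort

end Matrix.PosSemidef

namespace Stmt12Aux

variable {n : Type*} [Fintype n] [DecidableEq n]

lemma diag_nonneg {A : Matrix n n ℂ} (hA : A.PosSemidef) (i : n) :
    0 ≤ (A i i).re := by
  have h := hA.dotProduct_mulVec_nonneg (Pi.single i 1)
  rw [Complex.nonneg_iff] at h
  simpa [Matrix.mulVec_single, dotProduct, Pi.single_apply] using h.1

lemma trace_re_nonneg {A : Matrix n n ℂ} (hA : A.PosSemidef) : 0 ≤ A.trace.re := by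
  rw [Matrix.trace, Complex.re_sum]
  exact Finset.sum_nonneg fun i _ => diag_nonneg hA i

lemma trace_mul_re_nonneg {A B : Matrix n n ℂ} (hA : A.PosSemidef) (hB : B.PosSemidef) :
    0 ≤ (Matrix.trace (A * B)).re := by
  have h1 : A * B = A * hB.sqrt * hB.sqrt := by
    rw [Matrix.mul_assoc, hB.sqrt_mul_self]
  have h2 : Matrix.trace (A * B) = Matrix.trace (hB.sqrt * A * hB.sqrt) := by
    rw [h1, Matrix.trace_mul_comm, Matrix.mul_assoc]
  rw [h2]
  have := hA.conjTranspose_mul_mul_same hB.sqrt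
  rw [hB.posSemidef_sqrt.isHermitian.eq] at this
  exact trace_re_nonneg this

lemma smul_psd {c : ℝ} (hc : 0 ≤ c) {A : Matrix n n ℂ} (hA : A.PosSemidef) :
    ((c : ℂ) • A).PosSemidef := by
  refine Matrix.PosSemidef.of_dotProduct_mulVec_nonneg ?_ fun x => ?_
  · unfold Matrix.IsHermitian
    rw [Matrix.conjTranspose_smul, hA.1.eq, Complex.star_def, Complex.conj_ofReal]
  · rw [Matrix.smul_mulVec, dotProduct_smul, smul_eq_mul]
    exact mul_nonneg (Complex.zero_le_real.2 hc) (hA.dotProduct_mulVec_nonneg x)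

set_option maxHeartbeats 400000 in
set_option synthInstance.maxHeartbeats 200000 in
lemma eig_abs_le_opNorm {X : Matrix n n ℂ} (hX : X.IsHermitian) (i : n) :
    |hX.eigenvalues i| ≤ opNorm X := by
  have hnv : ‖hX.eigenvectorBasis i‖ = 1 := hX.eigenvectorBasis.orthonormal.1 i
  have happ : Matrix.toEuclideanLin X (hX.eigenvectorBasis i)
      = hX.eigenvalues i • hX.eigenvectorBasis i := by
    refine (WithLp.equiv 2 (n → ℂ)).injective ?_
    rw [WithLp.equiv_apply, Matrix.ofLp_toEuclideanLin_apply]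
    exact hX.mulVec_eigenvectorBasis i
  have hb := ContinuousLinearMap.le_opNorm
      (LinearMap.toContinuousLinearMap (Matrix.toEuclideanLin X)) (hX.eigenvectorBasis i)
  rw [LinearMap.coe_toContinuousLinearMap'] at hb
  rw [happ, norm_smul, hnv, mul_one, Real.norm_eq_abs] at hb
  simpa [opNorm, hnv] using hb

lemma sandwich_one {X : Matrix n n ℂ} (hX : X.IsHermitian) {c : ℝ} (hc : opNorm X ≤ c) :
    ((c : ℂ) • 1 - X).PosSemidef ∧ ((c : ℂ) • 1 + X).PosSemidef := by
  set U : Matrix n n ℂ := (hX.eigenvectorUnitary : Matrix n n ℂ) with hUdef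
  have hU : U * star U = 1 := Matrix.mem_unitaryGroup_iff.mp hX.eigenvectorUnitary.2
  have hsm : (c : ℂ) • (1 : Matrix n n ℂ) = U * Matrix.diagonal (fun _ => (c : ℂ)) * star U := by
    rw [← Matrix.smul_one_eq_diagonal, Matrix.mul_smul, mul_one, Matrix.smul_mul, hU]
  constructor
  · have key : (c : ℂ) • (1 : Matrix n n ℂ) - X
        = U * Matrix.diagonal (fun i => ((c - hX.eigenvalues i : ℝ) : ℂ)) * star U := by
      conv_lhs => rw [hX.spectral_theorem, Unitary.conjStarAlgAut_apply, ← hUdef]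
      rw [hsm, ← Matrix.sub_mul, ← Matrix.mul_sub, Matrix.diagonal_sub]
      congr 2 with i
      push_cast
      simp
    rw [key]
    exact (Matrix.PosSemidef.diagonal fun i => Complex.zero_le_real.2 (by
      have := (abs_le.mp ((eig_abs_le_opNorm hX i).trans hc)).2; linarith)).mul_mul_conjTranspose_same U
  · have key : (c : ℂ) • (1 : Matrix n n ℂ) + X
        = U * Matrix.diagonal (fun i => ((c + hX.eigenvalues i : ℝ) : ℂ)) * star U := by
      conv_lhs => rw [hX.spectral_theorem, Unitary.conjStarAlgAut_apply, ← hUdef]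
      rw [hsm, ← Matrix.add_mul, ← Matrix.mul_add, Matrix.diagonal_add]
      congr 2 with i
      push_cast
      simp
    rw [key]
    exact (Matrix.PosSemidef.diagonal fun i => Complex.zero_le_real.2 (by
      have := (abs_le.mp ((eig_abs_le_opNorm hX i).trans hc)).1; linarith)).mul_mul_conjTranspose_same U

end Stmt12Aux

namespace Stmt12Aux

variable {n : Type*} [Fintype n] [DecidableEq n]

lemma conj_unitary {U : Matrix n n ℂ} (hU' : star U * U = 1) (D E : Matrix n n ℂ) :
    (U * D * star U) * (U * E * star U) = U * (D * E) * star U := by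
  have h1 : (U * D * star U) * (U * E * star U) = U * D * ((star U * U) * (E * star U)) := by
    simp only [mul_assoc]
  rw [h1, hU', one_mul]
  simp only [mul_assoc]

lemma trace_conj_unitary {U : Matrix n n ℂ} (hU' : star U * U = 1) (D : Matrix n n ℂ) :
    Matrix.trace (U * D * star U) = Matrix.trace D := by
  rw [Matrix.trace_mul_comm, ← Matrix.mul_assoc, hU', one_mul]

lemma traceNorm_eq_sum_abs_eig {M : Matrix n n ℂ} (hM : M.IsHermitian) :
    traceNorm M = ∑ i, |hM.eigenvalues i| := by
  set U : Matrix n n ℂ := (hM.eigenvectorUnitary : Matrix n n ℂ) with hUdef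
  have hU' : star U * U = 1 := Matrix.mem_unitaryGroup_iff'.mp hM.eigenvectorUnitary.2
  set S : Matrix n n ℂ := U * Matrix.diagonal (fun i => (RCLike.ofReal (K := ℂ) |hM.eigenvalues i|)) * star U
    with hS
  have hSpsd : S.PosSemidef :=
    (Matrix.PosSemidef.diagonal fun i =>
      RCLike.ofReal_nonneg.2 (abs_nonneg _)).mul_mul_conjTranspose_same U
  have hsq : S ^ 2 = Mᴴ * M := by
    have hMM : Mᴴ * M = (U * Matrix.diagonal (RCLike.ofReal ∘ hM.eigenvalues) * star U) *
        (U * Matrix.diagonal (RCLike.ofReal ∘ hM.eigenvalues) * star U) := by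
      rw [hM.eq]
      conv_lhs => rw [hM.spectral_theorem, Unitary.conjStarAlgAut_apply, ← hUdef]
    rw [hMM, conj_unitary hU', pow_two, hS, conj_unitary hU',
      Matrix.diagonal_mul_diagonal, Matrix.diagonal_mul_diagonal]
    refine congrArg (fun d => U * Matrix.diagonal d * star U) ?_
    funext i
    simp only [Function.comp_apply]
    rw [← RCLike.ofReal_mul, ← RCLike.ofReal_mul, abs_mul_abs_self]
  have hsqrt : S = (Matrix.posSemidef_conjTranspose_mul_self M).sqrt :=
    hSpsd.eq_sqrt_of_sq_eq _ hsq
  rw [traceNorm, ← hsqrt, hS, trace_conj_unitary hU', Matrix.trace_diagonal, Complex.re_sum]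
  refine Finset.sum_congr rfl fun i _ => ?_
  exact Complex.ofReal_re _

lemma traceNorm_le_of_sandwich {M B : Matrix n n ℂ} (hM : M.IsHermitian)
    (h1 : (B - M).PosSemidef) (h2 : (B + M).PosSemidef) :
    traceNorm M ≤ B.trace.re := by
  set U : Matrix n n ℂ := (hM.eigenvectorUnitary : Matrix n n ℂ) with hUdef
  have hU : U * star U = 1 := Matrix.mem_unitaryGroup_iff.mp hM.eigenvectorUnitary.2
  have hU' : star U * U = 1 := Matrix.mem_unitaryGroup_iff'.mp hM.eigenvectorUnitary.2
  have hdiag : star U * M * U = Matrix.diagonal (RCLike.ofReal ∘ hM.eigenvalues) :=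
    by simpa [Unitary.conjStarAlgAut_star_apply] using hM.conjStarAlgAut_star_eigenvectorUnitary
  set C : Matrix n n ℂ := star U * B * U with hC
  have hkey : ∀ i, |hM.eigenvalues i| ≤ (C i i).re := by
    intro i
    have e1 : star U * (B - M) * U = C - Matrix.diagonal (RCLike.ofReal ∘ hM.eigenvalues) := by
      rw [Matrix.mul_sub, Matrix.sub_mul, hdiag, hC]
    have e2 : star U * (B + M) * U = C + Matrix.diagonal (RCLike.ofReal ∘ hM.eigenvalues) := by
      rw [Matrix.mul_add, Matrix.add_mul, hdiag, hC]
    have p1 := h1.conjTranspose_mul_mul_same U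
    have p2 := h2.conjTranspose_mul_mul_same U
    rw [← Matrix.star_eq_conjTranspose, e1] at p1
    rw [← Matrix.star_eq_conjTranspose, e2] at p2
    have d1 := diag_nonneg p1 i
    have d2 := diag_nonneg p2 i
    have e3 : ((RCLike.ofReal (hM.eigenvalues i) : ℂ)).re = hM.eigenvalues i :=
      Complex.ofReal_re _
    simp only [Matrix.sub_apply, Matrix.add_apply, Matrix.diagonal_apply_eq,
      Complex.sub_re, Complex.add_re, Function.comp_apply, e3] at d1 d2
    rw [abs_le]
    exact ⟨by linarith, by linarith⟩
  rw [traceNorm_eq_sum_abs_eig hM]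
  have htr : C.trace = B.trace := by
    rw [hC, Matrix.trace_mul_comm, ← Matrix.mul_assoc, hU, one_mul]
  rw [← htr, Matrix.trace, Complex.re_sum]
  exact Finset.sum_le_sum fun i _ => hkey i

lemma traceNorm_zero : traceNorm (0 : Matrix n n ℂ) = 0 := by
  have h : (0 : Matrix n n ℂ) = (Matrix.posSemidef_conjTranspose_mul_self
      (0 : Matrix n n ℂ)).sqrt :=
    Matrix.PosSemidef.eq_sqrt_of_sq_eq Matrix.PosSemidef.zero _ (by simp)
  rw [traceNorm, ← h]
  simp

end Stmt12Aux

namespace Stmt12Aux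

variable {n : Type*} [Fintype n] [DecidableEq n]

lemma isHermitian_real_smul (c : ℝ) {A : Matrix n n ℂ} (hA : A.IsHermitian) :
    ((c : ℂ) • A).IsHermitian := by
  unfold Matrix.IsHermitian
  rw [Matrix.conjTranspose_smul, hA.eq, Complex.star_def, Complex.conj_ofReal]

lemma sum_psd {ι : Type*} (t : Finset ι) (f : ι → Matrix n n ℂ)
    (h : ∀ i ∈ t, (f i).PosSemidef) : (∑ i ∈ t, f i).PosSemidef :=
  Finset.sum_induction f _ (fun _ _ ha hb => ha.add hb) Matrix.PosSemidef.zero h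

end Stmt12Aux

set_option maxHeartbeats 1600000 in
set_option synthInstance.maxHeartbeats 400000 in
/-- stability of the canonical ensemble under perturbation of the POVM. -/
theorem stmt_12 {n : Type*} [Fintype n] [DecidableEq n] {m : ℕ}
    (ρ : Matrix n n ℂ) (hρ : ρ.PosDef) (hρt : ρ.trace = 1)
    (a A : Fin m → Matrix n n ℂ)
    (ha : ∀ j, (a j).PosSemidef) (hasum : ∑ j, a j = 1)
    (hA : ∀ j, (A j).PosSemidef) (hAsum : ∑ j, A j = 1)
    (lam : Fin m → ℝ) (hlam : ∀ j, lam j = (Matrix.trace (ρ * a j)).re)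
    (lam0 : ℝ) (hlam0pos : 0 < lam0) (hlam0 : ∀ j, lam0 ≤ lam j)
    (ε : ℝ) (hεpos : 0 < ε) (hε : ε ≤ (lam0 / 2) ^ 2)
    (hclose : ∑ j, opNorm (A j - a j) ≤ ε) :
    ∀ j, |(Matrix.trace (ρ * A j)).re - lam j| ≤ ε ∧
      traceNorm
        (((Matrix.trace (ρ * A j)).re : ℂ)⁻¹ •
            (hρ.posSemidef.sqrt * A j * hρ.posSemidef.sqrt)
         - (lam j : ℂ)⁻¹ • (hρ.posSemidef.sqrt * a j * hρ.posSemidef.sqrt))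
        ≤ 2 * ε / lam0 ^ 2 := by
  intro j
  set s : Matrix n n ℂ := hρ.posSemidef.sqrt with hsdef
  have hs : s.PosSemidef := hρ.posSemidef.posSemidef_sqrt
  have hss : s * s = ρ := hρ.posSemidef.sqrt_mul_self
  have hsH : sᴴ = s := hs.isHermitian.eq
  set X : Matrix n n ℂ := A j - a j with hXdef
  have hXH : X.IsHermitian := (hA j).isHermitian.sub (ha j).isHermitian
  have hXop : opNorm X ≤ ε := by
    refine le_trans ?_ hclose
    exact Finset.single_le_sum (f := fun k => opNorm (A k - a k))
      (fun k _ => norm_nonneg _) (Finset.mem_univ j)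
  obtain ⟨hsub, hadd⟩ := Stmt12Aux.sandwich_one hXH hXop
  -- part 1
  have htr1 : (Matrix.trace (ρ * A j)).re - lam j = (Matrix.trace (ρ * X)).re := by
    rw [hlam j, hXdef, Matrix.mul_sub, Matrix.trace_sub, Complex.sub_re]
  have hpart1 : |(Matrix.trace (ρ * A j)).re - lam j| ≤ ε := by
    rw [htr1]
    have k1 := Stmt12Aux.trace_mul_re_nonneg hρ.posSemidef hsub
    have k2 := Stmt12Aux.trace_mul_re_nonneg hρ.posSemidef hadd
    have e1 : Matrix.trace (ρ * ((ε : ℂ) • 1 - X))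
        = (ε : ℂ) * Matrix.trace ρ - Matrix.trace (ρ * X) := by
      rw [Matrix.mul_sub, Matrix.trace_sub, Matrix.mul_smul, Matrix.mul_one, Matrix.trace_smul,
        smul_eq_mul]
    have e2 : Matrix.trace (ρ * ((ε : ℂ) • 1 + X))
        = (ε : ℂ) * Matrix.trace ρ + Matrix.trace (ρ * X) := by
      rw [Matrix.mul_add, Matrix.trace_add, Matrix.mul_smul, Matrix.mul_one, Matrix.trace_smul,
        smul_eq_mul]
    rw [e1, hρt, mul_one] at k1
    rw [e2, hρt, mul_one] at k2
    rw [Complex.sub_re, Complex.ofReal_re] at k1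
    rw [Complex.add_re, Complex.ofReal_re] at k2
    rw [abs_le]
    exact ⟨by linarith, by linarith⟩
  refine ⟨hpart1, ?_⟩
  -- part 2
  by_cases hm2 : 2 ≤ m
  · -- the normalization constants
    set τ : ℝ := (Matrix.trace (ρ * A j)).re with hτdef
    set L : ℝ := lam j with hLdef
    have hsum1 : ∑ k, lam k = 1 := by
      have hts : ∑ k, Matrix.trace (ρ * a k) = Matrix.trace ρ := by
        rw [← Matrix.trace_sum, ← Finset.mul_sum, hasum, Matrix.mul_one]
      calc ∑ k, lam k = ∑ k, (Matrix.trace (ρ * a k)).re := by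
            exact Finset.sum_congr rfl fun k _ => hlam k
        _ = (∑ k, Matrix.trace (ρ * a k)).re := (Complex.re_sum _ _).symm
        _ = (Matrix.trace ρ).re := by rw [hts]
        _ = 1 := by rw [hρt]; rfl
    have hlam0half : lam0 ≤ 1 / 2 := by
      have hmsum : (m : ℝ) * lam0 ≤ ∑ k, lam k := by
        calc (m : ℝ) * lam0 = ∑ _k : Fin m, lam0 := by
              rw [Finset.sum_const, Finset.card_univ, Fintype.card_fin, nsmul_eq_mul]
          _ ≤ ∑ k, lam k := Finset.sum_le_sum fun k _ => hlam0 k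
      have hm2' : (2 : ℝ) ≤ (m : ℝ) := by exact_mod_cast hm2
      rw [hsum1] at hmsum
      nlinarith
    have hεs : ε ≤ lam0 ^ 2 / 4 := by nlinarith
    have hL0 : lam0 ≤ L := hlam0 j
    have hLpos : 0 < L := lt_of_lt_of_le hlam0pos hL0
    have hτL := abs_le.mp hpart1
    have hτpos : 0 < τ := by nlinarith [hτL.1]
    -- matrices
    set Sa : Matrix n n ℂ := s * a j * s with hSadef
    set SA : Matrix n n ℂ := s * A j * s with hSAdef
    have hSa : Sa.PosSemidef := by
      have := (ha j).conjTranspose_mul_mul_same s; rwa [hsH] at this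
    have h1ma : ((1 : Matrix n n ℂ) - a j).PosSemidef := by
      have he : (1 : Matrix n n ℂ) - a j = ∑ k ∈ Finset.univ.erase j, a k := by
        rw [Finset.sum_erase_eq_sub (Finset.mem_univ j), hasum]
      rw [he]
      exact Stmt12Aux.sum_psd _ _ fun k _ => ha k
    have hρSa : (ρ - Sa).PosSemidef := by
      have h := h1ma.conjTranspose_mul_mul_same s
      rw [hsH, Matrix.mul_sub, Matrix.sub_mul, Matrix.mul_one, hss] at h
      exact h
    have hsandsub : ((ε : ℂ) • ρ - s * X * s).PosSemidef := by
      have h := hsub.conjTranspose_mul_mul_same s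
      rw [hsH, Matrix.mul_sub, Matrix.sub_mul, Matrix.mul_smul, Matrix.mul_one,
        Matrix.smul_mul, hss] at h
      exact h
    have hsandadd : ((ε : ℂ) • ρ + s * X * s).PosSemidef := by
      have h := hadd.conjTranspose_mul_mul_same s
      rw [hsH, Matrix.mul_add, Matrix.add_mul, Matrix.mul_smul, Matrix.mul_one,
        Matrix.smul_mul, hss] at h
      exact h
    have hXS : s * X * s = SA - Sa := by
      rw [hXdef, Matrix.mul_sub, Matrix.sub_mul]
    set δ : ℝ := τ⁻¹ - L⁻¹ with hδdef
    set c : ℝ := ε / τ + |δ| with hcdef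
    set D : Matrix n n ℂ := (τ : ℂ)⁻¹ • SA - (L : ℂ)⁻¹ • Sa with hDdef
    set B : Matrix n n ℂ := (c : ℂ) • ρ with hBdef
    have hsplitsub : (((|δ| : ℝ) : ℂ) • ρ - ((δ : ℝ) : ℂ) • Sa).PosSemidef := by
      rcases le_or_gt 0 δ with hδ | hδ
      · rw [abs_of_nonneg hδ, ← smul_sub]
        exact Stmt12Aux.smul_psd hδ hρSa
      · rw [abs_of_neg hδ]
        have he : (((-δ : ℝ) : ℂ) • ρ - ((δ : ℝ) : ℂ) • Sa) = ((-δ : ℝ) : ℂ) • (ρ + Sa) := by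
          push_cast; module
        rw [he]
        exact Stmt12Aux.smul_psd (by linarith) (hρ.posSemidef.add hSa)
    have hsplitadd : (((|δ| : ℝ) : ℂ) • ρ + ((δ : ℝ) : ℂ) • Sa).PosSemidef := by
      rcases le_or_gt 0 δ with hδ | hδ
      · rw [abs_of_nonneg hδ, ← smul_add]
        exact Stmt12Aux.smul_psd hδ (hρ.posSemidef.add hSa)
      · rw [abs_of_neg hδ]
        have he : (((-δ : ℝ) : ℂ) • ρ + ((δ : ℝ) : ℂ) • Sa) = ((-δ : ℝ) : ℂ) • (ρ - Sa) := by
          push_cast; module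
        rw [he]
        exact Stmt12Aux.smul_psd (by linarith) hρSa
    have hBD1 : (B - D).PosSemidef := by
      have he : B - D = ((τ⁻¹ : ℝ) : ℂ) • ((ε : ℂ) • ρ - s * X * s)
          + ((((|δ| : ℝ) : ℂ)) • ρ - ((δ : ℝ) : ℂ) • Sa) := by
        rw [hBdef, hDdef, hXS, hcdef, hδdef]
        push_cast
        module
      rw [he]
      exact (Stmt12Aux.smul_psd (by positivity) hsandsub).add hsplitsub
    have hBD2 : (B + D).PosSemidef := by
      have he : B + D = ((τ⁻¹ : ℝ) : ℂ) • ((ε : ℂ) • ρ + s * X * s)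
          + ((((|δ| : ℝ) : ℂ)) • ρ + ((δ : ℝ) : ℂ) • Sa) := by
        rw [hBdef, hDdef, hXS, hcdef, hδdef]
        push_cast
        module
      rw [he]
      exact (Stmt12Aux.smul_psd (by positivity) hsandadd).add hsplitadd
    have hDH : D.IsHermitian := by
      have he : D = ((2⁻¹ : ℝ) : ℂ) • ((B + D) - (B - D)) := by push_cast; module
      rw [he]
      exact Stmt12Aux.isHermitian_real_smul _ (hBD2.isHermitian.sub hBD1.isHermitian)
    have hmain : traceNorm D ≤ B.trace.re := Stmt12Aux.traceNorm_le_of_sandwich hDH hBD1 hBD2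
    have hBtr : B.trace.re = c := by
      rw [hBdef, Matrix.trace_smul, hρt, smul_eq_mul, mul_one, Complex.ofReal_re]
    have habs : |δ| ≤ ε / (τ * L) := by
      rw [hδdef, inv_sub_inv (ne_of_gt hτpos) (ne_of_gt hLpos), abs_div,
        abs_of_pos (by positivity : (0:ℝ) < τ * L)]
      gcongr
      rw [abs_sub_comm]
      exact hpart1
    have hcle : c ≤ 2 * ε / lam0 ^ 2 := by
      have key : lam0 ^ 2 * (L + 1) ≤ 2 * (τ * L) := by
        have t1 : 0 ≤ (L - lam0) * L := mul_nonneg (by linarith) hLpos.le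
        have t2 : 0 ≤ (lam0 * L) * (1 / 2 - lam0) :=
          mul_nonneg (mul_nonneg hlam0pos.le hLpos.le) (by linarith)
        have t3 : ε * L ≤ lam0 ^ 2 / 4 * L := mul_le_mul_of_nonneg_right hεs hLpos.le
        have t4 : (L - ε) * L ≤ τ * L :=
          mul_le_mul_of_nonneg_right (by linarith [hτL.1]) hLpos.le
        have t5 : 0 ≤ lam0 * (L - lam0) := mul_nonneg hlam0pos.le (by linarith)
        nlinarith [t1, t2, t3, t4, t5]
      have hc2 : c ≤ ε / τ + ε / (τ * L) := by
        rw [hcdef]; linarith [habs]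
      have he : ε / τ + ε / (τ * L) = ε * (L + 1) / (τ * L) := by
        field_simp
      rw [he] at hc2
      refine hc2.trans ?_
      rw [div_le_div_iff₀ (by positivity) (by positivity)]
      nlinarith
    calc traceNorm D ≤ B.trace.re := hmain
      _ = c := hBtr
      _ ≤ 2 * ε / lam0 ^ 2 := hcle
  · -- m = 1
    have hm1 : m = 1 := by
      have := j.pos
      omega
    subst hm1
    have hj0 : j = 0 := Subsingleton.elim j 0
    have hAa : A j = a j := by
      have h1 : A j = 1 := by rw [hj0, ← Fin.sum_univ_one A, hAsum]
      have h2 : a j = 1 := by rw [hj0, ← Fin.sum_univ_one a, hasum]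
      rw [h1, h2]
    rw [hAa, ← hlam j, sub_self, Stmt12Aux.traceNorm_zero]
    positivity
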